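/- Fix T ≥ 1 and ε > 0. A model P̂ assigns to each t ≤ T and each context x_{<t} ∈ V^{t−1} a conditional distribution p̂_t(x_{<t}) ∈ Δ(V), and N(P̂) is the set of models P with d_TV(p_t(x_{<t}), p̂_t(x_{<t})) ≤ ε for all t ≤ T and x_{<t} ∈ V^{t−1}. For a strategy Q (another model) define L^T(Q, P) = E_Q[ Σ_{t=1}^T log p_t(X_{<t})_{X_t} ], the Q-expectation of the P-log-likelihood of the generated sequence. A strategy map P̂ ↦ Q(P̂) has no foresight if for all t ≤ T and x_{<t}, the vector q_t(x_{<t}; P̂) coincides with q_t(x_{<t}; P̂′) whenever p̂_s(x_{<s}) = p̂′_s(x_{<s}) for all s ≤ t and all contexts x_{<s}. Assume ε < max_i p̂_t(x_{<t})_i for all t, x_{<t}, all models P̂. Let Q̃(P̂) be the locally optimal strategy defined by q̃_t(x_{<t}) = argmax_{q ∈ Δ(V)} min_{p ∈ N(p̂_t(x_{<t}))} Σ_i q_i log p_i at every t and x_{<t}. Then for every no-foresight strategy map Q: inf_{P̂} min_{P ∈ N(P̂)} L^T(Q̃(P̂), P) ≥ inf_{P̂} min_{P ∈ N(P̂)}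 L^T(Q(P̂), P), where the infimum is over all models P̂ on V^T. -/

import Mathlib

open Finset

noncomputable def elog (x : ℝ) : EReal := if x ≤ 0 then ⊥ else ((Real.log x : ℝ) : EReal)

def simplex (d : ℕ) : Set (Fin d → ℝ) := {p | (∀ i, 0 ≤ p i) ∧ ∑ i, p i = 1}

noncomputable def dTV {d : ℕ} (p q : Fin d → ℝ) : ℝ := (∑ i, |p i - q i|) / 2

def nbhd {d : ℕ} (phat : Fin d → ℝ) (ε : ℝ) : Set (Fin d → ℝ) :=
  {p | p ∈ simplex d ∧ dTV p phat ≤ ε}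

noncomputable def obj {d : ℕ} (q p : Fin d → ℝ) : EReal :=
  ∑ i, ((q i : ℝ) : EReal) * elog (p i)

/-- A model on `V^T`: for each time `t` and context `x_{<t} ∈ V^t` a vector of
conditional next-token weights. -/
abbrev Model (d T : ℕ) := (t : Fin T) → ((Fin t → Fin d) → (Fin d → ℝ))

/-- All conditional rows of the model are probability vectors. -/
def validModel {d T : ℕ} (P : Model d T) : Prop := ∀ t x, P t x ∈ simplex d

/-- `N(P̂)`: models whose every conditional row is within TV distance `ε` of `P̂`'s. -/
def modelNbhd {d T : ℕ} (Phat : Model d T) (ε : ℝ) : Set (Model d T) :=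
  {P | validModel P ∧ ∀ t x, dTV (P t x) (Phat t x) ≤ ε}

/-- Probability assigned by a model `Q` to a full sequence `x ∈ V^T`. -/
noncomputable def seqProb {d T : ℕ} (Q : Model d T) (x : Fin T → Fin d) : ℝ :=
  ∏ t, Q t (fun s => x ⟨s, s.isLt.trans t.isLt⟩) (x t)

/-- `L^T(Q,P) = E_Q [ Σ_t log p_t(X_{<t})_{X_t} ]` in the extended reals. -/
noncomputable def Lval {d T : ℕ} (Q P : Model d T) : EReal :=
  ∑ x : Fin T → Fin d, ((seqProb Q x : ℝ) : EReal) *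
    ∑ t, elog (P t (fun s => x ⟨s, s.isLt.trans t.isLt⟩) (x t))

/-- A strategy map has no foresight if its decision at time `t` depends only on the
model's conditional distributions up to time `t`. -/
def noForesight {d T : ℕ} (Q : Model d T → Model d T) : Prop :=
  ∀ (Phat Phat' : Model d T) (t : Fin T),
    (∀ s : Fin T, s ≤ t → Phat s = Phat' s) → Q Phat t = Q Phat' t

-- ===== auxiliary development =====


lemma elog_nonpos {x : ℝ} (hx : x ≤ 1) : elog x ≤ 0 := by
  unfold elog
  split
  · exact bot_le
  · exact_mod_cast Real.log_nonpos (by linarith [not_le.mp ‹¬ x ≤ 0›]) hx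

lemma simplex_le_one {d : ℕ} {p : Fin d → ℝ} (hp : p ∈ simplex d) (i : Fin d) : p i ≤ 1 := by
  rcases hp with ⟨h0, h1⟩
  calc p i ≤ ∑ j, p j := Finset.single_le_sum (fun j _ => h0 j) (mem_univ i)
  _ = 1 := h1

lemma coe_mul_le {c : ℝ} (hc : 0 ≤ c) {a b : EReal} (h : a ≤ b) :
    (c : EReal) * a ≤ (c : EReal) * b :=
  mul_le_mul_of_nonneg_left h (by exact_mod_cast hc)

lemma coe_mul_nonpos {c : ℝ} (hc : 0 ≤ c) {a : EReal} (ha : a ≤ 0) : (c : EReal) * a ≤ 0 := by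
  simpa using coe_mul_le hc ha

lemma obj_nonpos {d : ℕ} {q p : Fin d → ℝ} (hq : ∀ i, 0 ≤ q i) (hp : ∀ i, p i ≤ 1) :
    obj q p ≤ 0 :=
  Finset.sum_nonpos fun i _ => coe_mul_nonpos (hq i) (elog_nonpos (hp i))

lemma coe_mul_distrib_nonpos {c : ℝ} (hc : 0 ≤ c) {a b : EReal} (ha : a ≤ 0) (hb : b ≤ 0) :
    (c : EReal) * (a + b) = (c : EReal) * a + (c : EReal) * b := by
  rcases eq_or_lt_of_le hc with rfl | hc'
  · simp
  have hc'' : (0 : EReal) < (c : EReal) := by exact_mod_cast hc'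
  induction a using EReal.rec with
  | bot => rw [EReal.bot_add, EReal.mul_bot_of_pos hc'', EReal.bot_add]
  | top => exact absurd ha (by simp)
  | coe a =>
    induction b using EReal.rec with
    | bot => rw [EReal.add_bot, EReal.mul_bot_of_pos hc'', EReal.add_bot]
    | top => exact absurd hb (by simp)
    | coe b => norm_cast; ring

lemma coe_fsum {ι : Type*} (s : Finset ι) (w : ι → ℝ) :
    ((∑ i ∈ s, w i : ℝ) : EReal) = ∑ i ∈ s, ((w i : ℝ) : EReal) := by
  classical
  induction s using Finset.induction with
  | empty => simp
  | @insert a s h ih => rw [Finset.sum_insert h, Finset.sum_insert h, EReal.coe_add, ih]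

lemma sum_coe_mul {ι : Type*} (s : Finset ι) (w : ι → ℝ) (hw : ∀ i ∈ s, 0 ≤ w i)
    (m : EReal) :
    ∑ i ∈ s, ((w i : ℝ) : EReal) * m = ((∑ i ∈ s, w i : ℝ) : EReal) * m := by
  classical
  induction s using Finset.induction with
  | empty => simp
  | @insert a s h ih =>
    rw [Finset.sum_insert h, Finset.sum_insert h, EReal.coe_add,
      EReal.right_distrib_of_nonneg (by exact_mod_cast hw a (mem_insert_self a s))
        (by exact_mod_cast Finset.sum_nonneg fun i hi => hw i (mem_insert_of_mem hi)),
      ih (fun i hi => hw i (mem_insert_of_mem hi))]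

lemma coe_mul_sum_nonpos {ι : Type*} (s : Finset ι) {c : ℝ} (hc : 0 ≤ c)
    (f : ι → EReal) (hf : ∀ i ∈ s, f i ≤ 0) :
    (c : EReal) * ∑ i ∈ s, f i = ∑ i ∈ s, (c : EReal) * f i := by
  classical
  induction s using Finset.induction with
  | empty => simp
  | @insert a s h ih =>
    rw [Finset.sum_insert h, Finset.sum_insert h,
      coe_mul_distrib_nonpos hc (hf a (mem_insert_self a s))
        (Finset.sum_nonpos fun i hi => hf i (mem_insert_of_mem hi)),
      ih (fun i hi => hf i (mem_insert_of_mem hi))]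

lemma ereal_le_of_forall_add {x : EReal} {y : ℝ} (h : ∀ δ : ℝ, 0 < δ → x ≤ (y : EReal) + (δ : EReal)) :
    x ≤ (y : EReal) := by
  induction x using EReal.rec with
  | bot => exact bot_le
  | top =>
    have := h 1 one_pos
    rw [← EReal.coe_add] at this
    exact absurd (top_le_iff.mp this) (EReal.coe_ne_top _)
  | coe r =>
    by_contra hc
    have hyr : y < r := by exact_mod_cast not_le.mp hc
    have h2 := h ((r - y)/2) (by linarith)
    rw [← EReal.coe_add] at h2
    have : r ≤ y + (r - y)/2 := by exact_mod_cast h2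
    linarith

lemma ereal_eq_bot_of_forall_le {x : EReal} (h : ∀ r : ℝ, x ≤ (r : EReal)) : x = ⊥ := by
  rw [EReal.eq_bot_iff_forall_lt]
  intro r
  exact lt_of_le_of_lt (h (r - 1)) (by exact_mod_cast sub_one_lt r)

-- ==================== cons infrastructure ====================

def tailM {d T : ℕ} (Q : Model d (T + 1)) (j : Fin d) : Model d T :=
  fun t c => Q t.succ (Fin.cons (α := fun _ => Fin d) j c)

lemma tailM_valid {d T : ℕ} {Q : Model d (T + 1)} (hQ : validModel Q) (j : Fin d) :
    validModel (tailM Q j) := fun t c => hQ t.succ (Fin.cons (α := fun _ => Fin d) j c)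

lemma prefix_succ {d T : ℕ} (j : Fin d) (y : Fin T → Fin d) (t : Fin T) :
    (fun s : Fin ((t.succ : Fin (T + 1)) : ℕ) =>
        Fin.cons (α := fun _ => Fin d) j y ⟨s, s.isLt.trans t.succ.isLt⟩)
      = Fin.cons (α := fun _ => Fin d) j
          (fun s : Fin (t : ℕ) => y ⟨s, s.isLt.trans t.isLt⟩) := by
  funext s
  induction s using Fin.cases with
  | zero => rfl
  | succ i => rfl

lemma seqProb_cons {d T : ℕ} (Q : Model d (T + 1)) (j : Fin d) (y : Fin T → Fin d) :
    seqProb Q (Fin.cons (α := fun _ => Fin d) j y)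
      = Q 0 Fin.elim0 j * seqProb (tailM Q j) y := by
  unfold seqProb
  rw [Fin.prod_univ_succ]
  congr 1
  · congr 1
    funext s; exact s.elim0
  · apply Finset.prod_congr rfl
    intro t _
    rw [prefix_succ, Fin.cons_succ]
    rfl

lemma sum_funsplit {d T : ℕ} {M : Type*} [AddCommMonoid M] (F : (Fin (T + 1) → Fin d) → M) :
    ∑ x : Fin (T + 1) → Fin d, F x
      = ∑ j : Fin d, ∑ y : Fin T → Fin d, F (Fin.cons (α := fun _ => Fin d) j y) := by
  have h1 : ∑ x : Fin (T + 1) → Fin d, F x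
      = ∑ p : Fin d × (Fin T → Fin d), F (Fin.cons (α := fun _ => Fin d) p.1 p.2) :=
    (Fintype.sum_equiv (Fin.consEquiv (fun _ => Fin d)) _ _ (fun p => rfl)).symm
  rw [h1, Fintype.sum_prod_type]

lemma seqProb_nonneg {d T : ℕ} {Q : Model d T} (hQ : validModel Q) (x : Fin T → Fin d) :
    0 ≤ seqProb Q x :=
  Finset.prod_nonneg fun t _ => (hQ t _).1 _

lemma sum_seqProb {d T : ℕ} : ∀ {Q : Model d T}, validModel Q → ∑ x, seqProb Q x = 1 := by
  induction T with
  | zero =>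
    intro Q hQ
    rw [Fintype.sum_unique]
    simp [seqProb]
  | succ T ih =>
    intro Q hQ
    rw [sum_funsplit (F := fun x => seqProb Q x)]
    have : ∀ j : Fin d, ∑ y : Fin T → Fin d, seqProb Q (Fin.cons (α := fun _ => Fin d) j y)
        = Q 0 Fin.elim0 j := by
      intro j
      calc ∑ y : Fin T → Fin d, seqProb Q (Fin.cons (α := fun _ => Fin d) j y)
          = ∑ y : Fin T → Fin d, Q 0 Fin.elim0 j * seqProb (tailM Q j) y := by
            exact Finset.sum_congr rfl fun y _ => seqProb_cons Q j y
        _ = Q 0 Fin.elim0 j * ∑ y, seqProb (tailM Q j) y := by rw [Finset.mul_sum]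
        _ = Q 0 Fin.elim0 j := by rw [ih (tailM_valid hQ j), mul_one]
    rw [Finset.sum_congr rfl fun j _ => this j]
    exact (hQ 0 Fin.elim0).2

lemma Lval_cons {d T : ℕ} (Q P : Model d (T + 1)) (hQ : validModel Q)
    (hP1 : ∀ t c i, P t c i ≤ 1) :
    Lval Q P = ∑ j : Fin d, ((Q 0 Fin.elim0 j : ℝ) : EReal) *
      (elog (P 0 Fin.elim0 j) + Lval (tailM Q j) (tailM P j)) := by
  have htail1 : ∀ (j : Fin d) (y : Fin T → Fin d),
      (∑ t : Fin (T + 1), elog (P t (fun s => Fin.cons (α := fun _ => Fin d) j y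
          ⟨s, s.isLt.trans t.isLt⟩) (Fin.cons (α := fun _ => Fin d) j y t)))
        = elog (P 0 Fin.elim0 j)
          + ∑ t : Fin T, elog ((tailM P j) t (fun s => y ⟨s, s.isLt.trans t.isLt⟩) (y t)) := by
    intro j y
    rw [Fin.sum_univ_succ]
    congr 1
    · congr 1
      · congr 1
        funext s; exact s.elim0
    · apply Finset.sum_congr rfl
      intro t _
      rw [prefix_succ, Fin.cons_succ]
      rfl
  unfold Lval
  rw [sum_funsplit]
  apply Finset.sum_congr rfl
  intro j _
  have hsp : ∀ y : Fin T → Fin d,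
      ((seqProb Q (Fin.cons (α := fun _ => Fin d) j y) : ℝ) : EReal)
        = ((Q 0 Fin.elim0 j : ℝ) : EReal) * ((seqProb (tailM Q j) y : ℝ) : EReal) := by
    intro y; rw [seqProb_cons, EReal.coe_mul]
  have hq0 : (0:ℝ) ≤ Q 0 Fin.elim0 j := (hQ 0 Fin.elim0).1 j
  have he : elog (P 0 Fin.elim0 j) ≤ 0 := elog_nonpos (hP1 0 Fin.elim0 j)
  have hS : ∀ y : Fin T → Fin d,
      (∑ t : Fin T, elog ((tailM P j) t (fun s => y ⟨s, s.isLt.trans t.isLt⟩) (y t))) ≤ 0 :=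
    fun y => Finset.sum_nonpos fun t _ => elog_nonpos (hP1 t.succ _ _)
  calc ∑ y : Fin T → Fin d, ((seqProb Q (Fin.cons (α := fun _ => Fin d) j y) : ℝ) : EReal) *
        ∑ t : Fin (T + 1), elog (P t (fun s => Fin.cons (α := fun _ => Fin d) j y
          ⟨s, s.isLt.trans t.isLt⟩) (Fin.cons (α := fun _ => Fin d) j y t))
      = ∑ y : Fin T → Fin d, ((Q 0 Fin.elim0 j : ℝ) : EReal) *
          (((seqProb (tailM Q j) y : ℝ) : EReal) *
            (elog (P 0 Fin.elim0 j)
              + ∑ t : Fin T, elog ((tailM P j) t (fun s => y ⟨s, s.isLt.trans t.isLt⟩) (y t)))) := by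
        apply Finset.sum_congr rfl
        intro y _
        rw [htail1 j y, hsp y, mul_assoc]
    _ = ((Q 0 Fin.elim0 j : ℝ) : EReal) * ∑ y : Fin T → Fin d,
          ((seqProb (tailM Q j) y : ℝ) : EReal) *
            (elog (P 0 Fin.elim0 j)
              + ∑ t : Fin T, elog ((tailM P j) t (fun s => y ⟨s, s.isLt.trans t.isLt⟩) (y t))) := by
        rw [coe_mul_sum_nonpos _ hq0]
        intro y _
        exact coe_mul_nonpos (seqProb_nonneg (tailM_valid hQ j) y)
          (add_nonpos he (hS y))
    _ = ((Q 0 Fin.elim0 j : ℝ) : EReal) *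
          (elog (P 0 Fin.elim0 j) + Lval (tailM Q j) (tailM P j)) := by
        congr 1
        calc ∑ y : Fin T → Fin d, ((seqProb (tailM Q j) y : ℝ) : EReal) *
              (elog (P 0 Fin.elim0 j)
                + ∑ t : Fin T, elog ((tailM P j) t (fun s => y ⟨s, s.isLt.trans t.isLt⟩) (y t)))
            = ∑ y : Fin T → Fin d, (((seqProb (tailM Q j) y : ℝ) : EReal) * elog (P 0 Fin.elim0 j)
                + ((seqProb (tailM Q j) y : ℝ) : EReal) *
                  ∑ t : Fin T, elog ((tailM P j) t (fun s => y ⟨s, s.isLt.trans t.isLt⟩) (y t))) := by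
              apply Finset.sum_congr rfl
              intro y _
              exact coe_mul_distrib_nonpos (seqProb_nonneg (tailM_valid hQ j) y) he (hS y)
          _ = (∑ y : Fin T → Fin d, ((seqProb (tailM Q j) y : ℝ) : EReal) * elog (P 0 Fin.elim0 j))
                + Lval (tailM Q j) (tailM P j) := by
              rw [Finset.sum_add_distrib]; rfl
          _ = elog (P 0 Fin.elim0 j) + Lval (tailM Q j) (tailM P j) := by
              rw [sum_coe_mul _ _ (fun y _ => seqProb_nonneg (tailM_valid hQ j) y),
                sum_seqProb (tailM_valid hQ j)]
              norm_num

lemma L_lower {d T : ℕ} : ∀ (Q P : Model d T), validModel Q →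
    (∀ t c i, 0 ≤ P t c i) → (∀ t c i, P t c i ≤ 1) →
    ∀ (m : Fin T → EReal), (∀ t, m t ≤ 0) →
    (∀ t c, m t ≤ obj (Q t c) (P t c)) →
    ∑ t, m t ≤ Lval Q P := by
  induction T with
  | zero =>
    intro Q P hQ hP0 hP1 m hm0 hm
    have : Lval Q P = 0 := by
      unfold Lval
      rw [Fintype.sum_unique]
      simp
    rw [this]
    simp
  | succ T ih =>
    intro Q P hQ hP0 hP1 m hm0 hm
    rw [Lval_cons Q P hQ hP1, Fin.sum_univ_succ]
    set C : EReal := ∑ t : Fin T, m t.succ with hC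
    have hC0 : C ≤ 0 := Finset.sum_nonpos fun t _ => hm0 t.succ
    have hq0 : ∀ j, (0:ℝ) ≤ Q 0 Fin.elim0 j := (hQ 0 Fin.elim0).1
    have he : ∀ j, elog (P 0 Fin.elim0 j) ≤ 0 := fun j => elog_nonpos (hP1 0 Fin.elim0 j)
    have step1 : ∀ j : Fin d, ((Q 0 Fin.elim0 j : ℝ) : EReal) * (elog (P 0 Fin.elim0 j) + C)
        ≤ ((Q 0 Fin.elim0 j : ℝ) : EReal) *
          (elog (P 0 Fin.elim0 j) + Lval (tailM Q j) (tailM P j)) := by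
      intro j
      apply coe_mul_le (hq0 j)
      apply add_le_add_right
      exact ih (tailM Q j) (tailM P j) (tailM_valid hQ j)
        (fun t c i => hP0 t.succ _ i) (fun t c i => hP1 t.succ _ i)
        (fun t => m t.succ) (fun t => hm0 t.succ)
        (fun t c => hm t.succ (Fin.cons (α := fun _ => Fin d) j c))
    have step2 : m 0 + C ≤ ∑ j : Fin d,
        ((Q 0 Fin.elim0 j : ℝ) : EReal) * (elog (P 0 Fin.elim0 j) + C) := by
      have hdist : ∀ j : Fin d, ((Q 0 Fin.elim0 j : ℝ) : EReal) * (elog (P 0 Fin.elim0 j) + C)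
          = ((Q 0 Fin.elim0 j : ℝ) : EReal) * elog (P 0 Fin.elim0 j)
            + ((Q 0 Fin.elim0 j : ℝ) : EReal) * C :=
        fun j => coe_mul_distrib_nonpos (hq0 j) (he j) hC0
      rw [Finset.sum_congr rfl fun j _ => hdist j, Finset.sum_add_distrib,
        sum_coe_mul _ _ (fun j _ => hq0 j) C, (hQ 0 Fin.elim0).2]
      rw [EReal.coe_one, one_mul]
      exact add_le_add_left (hm 0 Fin.elim0) C
    calc m 0 + C ≤ _ := step2
      _ ≤ _ := Finset.sum_le_sum fun j _ => step1 j

lemma L_upper {d T : ℕ} : ∀ (Q P : Model d T), validModel Q →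
    (∀ t c i, 0 ≤ P t c i) → (∀ t c i, P t c i ≤ 1) →
    ∀ (M : Fin T → EReal), (∀ t, M t ≤ 0) →
    (∀ t c, obj (Q t c) (P t c) ≤ M t) →
    Lval Q P ≤ ∑ t, M t := by
  induction T with
  | zero =>
    intro Q P hQ hP0 hP1 M hM0 hM
    have : Lval Q P = 0 := by
      unfold Lval
      rw [Fintype.sum_unique]
      simp
    rw [this]
    simp
  | succ T ih =>
    intro Q P hQ hP0 hP1 M hM0 hM
    rw [Lval_cons Q P hQ hP1, Fin.sum_univ_succ]
    set C : EReal := ∑ t : Fin T, M t.succ with hC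
    have hC0 : C ≤ 0 := Finset.sum_nonpos fun t _ => hM0 t.succ
    have hq0 : ∀ j, (0:ℝ) ≤ Q 0 Fin.elim0 j := (hQ 0 Fin.elim0).1
    have he : ∀ j, elog (P 0 Fin.elim0 j) ≤ 0 := fun j => elog_nonpos (hP1 0 Fin.elim0 j)
    have step1 : ∀ j : Fin d, ((Q 0 Fin.elim0 j : ℝ) : EReal) *
          (elog (P 0 Fin.elim0 j) + Lval (tailM Q j) (tailM P j))
        ≤ ((Q 0 Fin.elim0 j : ℝ) : EReal) * (elog (P 0 Fin.elim0 j) + C) := by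
      intro j
      apply coe_mul_le (hq0 j)
      apply add_le_add_right
      exact ih (tailM Q j) (tailM P j) (tailM_valid hQ j)
        (fun t c i => hP0 t.succ _ i) (fun t c i => hP1 t.succ _ i)
        (fun t => M t.succ) (fun t => hM0 t.succ)
        (fun t c => hM t.succ (Fin.cons (α := fun _ => Fin d) j c))
    have step2 : (∑ j : Fin d,
        ((Q 0 Fin.elim0 j : ℝ) : EReal) * (elog (P 0 Fin.elim0 j) + C)) ≤ M 0 + C := by
      have hdist : ∀ j : Fin d, ((Q 0 Fin.elim0 j : ℝ) : EReal) * (elog (P 0 Fin.elim0 j) + C)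
          = ((Q 0 Fin.elim0 j : ℝ) : EReal) * elog (P 0 Fin.elim0 j)
            + ((Q 0 Fin.elim0 j : ℝ) : EReal) * C :=
        fun j => coe_mul_distrib_nonpos (hq0 j) (he j) hC0
      rw [Finset.sum_congr rfl fun j _ => hdist j, Finset.sum_add_distrib,
        sum_coe_mul _ _ (fun j _ => hq0 j) C, (hQ 0 Fin.elim0).2]
      rw [EReal.coe_one, one_mul]
      exact add_le_add_left (hM 0 Fin.elim0) C
    calc ∑ j : Fin d, ((Q 0 Fin.elim0 j : ℝ) : EReal) *
          (elog (P 0 Fin.elim0 j) + Lval (tailM Q j) (tailM P j))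
        ≤ ∑ j : Fin d, ((Q 0 Fin.elim0 j : ℝ) : EReal) *
          (elog (P 0 Fin.elim0 j) + C) := Finset.sum_le_sum fun j _ => step1 j
      _ ≤ M 0 + C := step2


/-- the locally optimal strategy `Q̃` achieves the best worst-case
multi-step value among all no-foresight strategy maps. -/
theorem stmt3 {d T : ℕ} (hT : 1 ≤ T) (ε : ℝ) (hε : 0 < ε)
    (Q Qt : Model d T → Model d T)
    (hQvalid : ∀ Phat, validModel (Q Phat))
    (hQnf : noForesight Q)
    (hQt : ∀ (Phat : Model d T) (t : Fin T) (x : Fin t → Fin d),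
        Qt Phat t x ∈ simplex d ∧
        ∀ q ∈ simplex d,
          ⨅ p ∈ nbhd (Phat t x) ε, obj q p
            ≤ ⨅ p ∈ nbhd (Phat t x) ε, obj (Qt Phat t x) p) :
    (⨅ Phat ∈ {P : Model d T | validModel P ∧ ∀ t x, ∃ i, ε < P t x i},
        ⨅ P ∈ modelNbhd Phat ε, Lval (Q Phat) P)
      ≤ ⨅ Phat ∈ {P : Model d T | validModel P ∧ ∀ t x, ∃ i, ε < P t x i},
          ⨅ P ∈ modelNbhd Phat ε, Lval (Qt Phat) P := by
  classical
  rcases Nat.eq_zero_or_pos d with hd0 | hd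
  · subst hd0
    have hempty : {P : Model 0 T | validModel P ∧ ∀ t x, ∃ i, ε < P t x i} = ∅ := by
      ext P
      simp only [Set.mem_setOf_eq, Set.mem_empty_iff_false, iff_false, not_and]
      intro hv
      exfalso
      have := (hv ⟨0, hT⟩ Fin.elim0).2
      simpa using this
    rw [hempty]
    simp
  refine le_iInf₂ fun Phat hS => ?_
  obtain ⟨hPv, hPe⟩ := hS
  have hQtv : ∀ Ph : Model d T, validModel (Qt Ph) := fun Ph t c => (hQt Ph t c).1
  set a : (t : Fin T) → (Fin (t : ℕ) → Fin d) → EReal :=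
    fun t c => ⨅ p ∈ nbhd (Phat t c) ε, obj (Qt Phat t c) p with ha
  have hne : ∀ t : Fin T, ∃ c₀, ∀ c, a t c₀ ≤ a t c := by
    intro t
    have : Nonempty (Fin (t : ℕ) → Fin d) := ⟨fun _ => ⟨0, hd⟩⟩
    obtain ⟨c₀, -, h⟩ := Finset.exists_min_image Finset.univ (a t) Finset.univ_nonempty
    exact ⟨c₀, fun c => h c (Finset.mem_univ c)⟩
  choose ct hct using hne
  set Phat' : Model d T := fun t _ => Phat t (ct t) with hPhat'
  have hS' : Phat' ∈ {P : Model d T | validModel P ∧ ∀ t x, ∃ i, ε < P t x i} :=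
    ⟨fun t c => hPv t (ct t), fun t c => hPe t (ct t)⟩
  set m : Fin T → EReal := fun t => a t (ct t) with hmdef
  have hself : ∀ (r : Fin d → ℝ), r ∈ simplex d → r ∈ nbhd r ε := by
    intro r hr
    refine ⟨hr, ?_⟩
    have : dTV r r = 0 := by simp [dTV]
    rw [this]; exact hε.le
  have hm0 : ∀ t, m t ≤ 0 := by
    intro t
    have h1 : a t (ct t) ≤ obj (Qt Phat t (ct t)) (Phat t (ct t)) :=
      iInf₂_le _ (hself _ (hPv t (ct t)))
    exact h1.trans (obj_nonpos (hQtv Phat t (ct t)).1 (simplex_le_one (hPv t (ct t))))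
  have key : ∀ (t : Fin T) (c : Fin (t : ℕ) → Fin d),
      (⨅ p ∈ nbhd (Phat' t c) ε, obj (Qt Phat' t c) p) = m t := by
    intro t c
    apply le_antisymm
    · exact (hQt Phat t (ct t)).2 (Qt Phat' t c) (hQtv Phat' t c)
    · exact (hQt Phat' t c).2 (Qt Phat t (ct t)) (hQtv Phat t (ct t))
  have stepR : (∑ t, m t) ≤ ⨅ P ∈ modelNbhd Phat ε, Lval (Qt Phat) P := by
    refine le_iInf₂ fun P hP => ?_
    refine L_lower (Qt Phat) P (hQtv Phat) (fun t c i => (hP.1 t c).1 i)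
      (fun t c i => simplex_le_one (hP.1 t c) i) m hm0 ?_
    intro t c
    exact (hct t c).trans (iInf₂_le _ ⟨hP.1 t c, hP.2 t c⟩)
  have hgle : ∀ (t : Fin T) (c : Fin (t : ℕ) → Fin d),
      (⨅ p ∈ nbhd (Phat' t c) ε, obj (Q Phat' t c) p) ≤ m t :=
    fun t c => le_trans ((hQt Phat' t c).2 (Q Phat' t c) (hQvalid Phat' t c))
      (le_of_eq (key t c))
  have main : (⨅ P ∈ modelNbhd Phat' ε, Lval (Q Phat') P) ≤ ∑ t, m t := by
    by_cases hbot : ∀ t, m t ≠ ⊥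
    · set μ : Fin T → ℝ := fun t => (m t).toReal with hμ
      have hcoe : ∀ t, ((μ t : ℝ) : EReal) = m t := fun t =>
        EReal.coe_toReal (lt_of_le_of_lt (hm0 t) (by norm_num : (0 : EReal) < ⊤)).ne (hbot t)
      have hsum_eq : (∑ t, m t) = ((∑ t, μ t : ℝ) : EReal) := by
        rw [coe_fsum]
        exact Finset.sum_congr rfl fun t _ => (hcoe t).symm
      rw [hsum_eq]
      apply ereal_le_of_forall_add
      intro δ hδ
      set δ' := δ / T with hδ'def
      have hT0 : (0 : ℝ) < T := by exact_mod_cast hT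
      have hδ'0 : 0 < δ' := div_pos hδ hT0
      have hex : ∀ (t : Fin T) (c : Fin (t : ℕ) → Fin d),
          ∃ p, p ∈ nbhd (Phat' t c) ε ∧ obj (Q Phat' t c) p < ((μ t + δ' : ℝ) : EReal) := by
        intro t c
        have hlt : (⨅ p ∈ nbhd (Phat' t c) ε, obj (Q Phat' t c) p)
            < ((μ t + δ' : ℝ) : EReal) := by
          refine lt_of_le_of_lt (hgle t c) ?_
          rw [← hcoe t]
          exact_mod_cast (by linarith : μ t < μ t + δ')
        obtain ⟨p, hp⟩ := iInf_lt_iff.mp hlt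
        obtain ⟨hpm, hp2⟩ := iInf_lt_iff.mp hp
        exact ⟨p, hpm, hp2⟩
      choose P hPmem hPlt using hex
      have hPN : P ∈ modelNbhd Phat' ε :=
        ⟨fun t c => (hPmem t c).1, fun t c => (hPmem t c).2⟩
      refine le_trans (iInf₂_le P hPN) ?_
      have hup : Lval (Q Phat') P ≤ ∑ t : Fin T, min ((μ t + δ' : ℝ) : EReal) 0 := by
        refine L_upper (Q Phat') P (hQvalid Phat') (fun t c i => ((hPmem t c).1).1 i)
          (fun t c i => simplex_le_one ((hPmem t c).1) i) _
          (fun t => min_le_right _ _) ?_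
        intro t c
        exact le_min (hPlt t c).le (obj_nonpos (hQvalid Phat' t c).1
          (fun i => simplex_le_one ((hPmem t c).1) i))
      refine hup.trans ?_
      calc ∑ t : Fin T, min ((μ t + δ' : ℝ) : EReal) 0
          ≤ ∑ t : Fin T, ((μ t + δ' : ℝ) : EReal) :=
            Finset.sum_le_sum fun t _ => min_le_left _ _
        _ = ((∑ t, (μ t + δ') : ℝ) : EReal) := (coe_fsum _ _).symm
        _ = ((∑ t, μ t : ℝ) : EReal) + (δ : EReal) := by
            rw [← EReal.coe_add]
            norm_cast
            rw [Finset.sum_add_distrib, Finset.sum_const, Finset.card_fin, nsmul_eq_mul]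
            have : (T : ℝ) * (δ / T) = δ := by field_simp
            rw [this]
    · push_neg at hbot
      obtain ⟨t0, ht0⟩ := hbot
      have hsum : (∑ t, m t) = ⊥ := by
        rw [← Finset.add_sum_erase Finset.univ m (Finset.mem_univ t0), ht0, EReal.bot_add]
      rw [hsum]
      suffices h : (⨅ P ∈ modelNbhd Phat' ε, Lval (Q Phat') P) = ⊥ by
        exact le_of_eq h
      apply ereal_eq_bot_of_forall_le
      intro r
      set τ : EReal := ((min r 0 : ℝ) : EReal) with hτ
      have hex : ∀ (t : Fin T) (c : Fin (t : ℕ) → Fin d),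
          ∃ p, p ∈ nbhd (Phat' t c) ε ∧ obj (Q Phat' t c) p ≤ (if t = t0 then τ else 0) := by
        intro t c
        by_cases h : t = t0
        · subst h
          have hbot' : (⨅ p ∈ nbhd (Phat' t c) ε, obj (Q Phat' t c) p) = ⊥ :=
            le_bot_iff.mp (ht0 ▸ hgle t c)
          have hlt : (⨅ p ∈ nbhd (Phat' t c) ε, obj (Q Phat' t c) p) < τ := by
            rw [hbot']
            exact bot_lt_iff_ne_bot.mpr (EReal.coe_ne_bot _)
          obtain ⟨p, hp⟩ := iInf_lt_iff.mp hlt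
          obtain ⟨hpm, hp2⟩ := iInf_lt_iff.mp hp
          refine ⟨p, hpm, ?_⟩
          simpa using hp2.le
        · refine ⟨Phat' t c, hself _ (hPv t (ct t)), ?_⟩
          simp only [h, if_false]
          exact obj_nonpos (hQvalid Phat' t c).1 (simplex_le_one (hPv t (ct t)))
      choose P hPmem hPle using hex
      have hPN : P ∈ modelNbhd Phat' ε :=
        ⟨fun t c => (hPmem t c).1, fun t c => (hPmem t c).2⟩
      refine le_trans (iInf₂_le P hPN) ?_
      have hM0 : ∀ t : Fin T, (if t = t0 then τ else 0 : EReal) ≤ 0 := by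
        intro t
        split
        · rw [hτ]; exact_mod_cast min_le_right r 0
        · exact le_refl _
      have hup : Lval (Q Phat') P ≤ ∑ t : Fin T, (if t = t0 then τ else 0) :=
        L_upper (Q Phat') P (hQvalid Phat') (fun t c i => ((hPmem t c).1).1 i)
          (fun t c i => simplex_le_one ((hPmem t c).1) i) _ hM0 hPle
      refine hup.trans ?_
      have hsum2 : (∑ t : Fin T, (if t = t0 then τ else 0 : EReal)) = τ := by
        rw [Finset.sum_ite_eq' Finset.univ t0 (fun _ => τ)]
        simp
      rw [hsum2, hτ]
      exact_mod_cast min_le_left r 0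
  calc (⨅ Phat ∈ {P : Model d T | validModel P ∧ ∀ t x, ∃ i, ε < P t x i},
        ⨅ P ∈ modelNbhd Phat ε, Lval (Q Phat) P)
      ≤ ⨅ P ∈ modelNbhd Phat' ε, Lval (Q Phat') P := iInf₂_le Phat' hS'
    _ ≤ ∑ t, m t := main
    _ ≤ ⨅ P ∈ modelNbhd Phat ε, Lval (Qt Phat) P := stepR
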